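/- Let f : [0,1]^d → ℝ be continuously differentiable, fix i ∈ {1,…,d}, and assume the total variance D > 0. Then S_i^tot ≤ ς_i / D, where ς_i = (1/2)∫_{H^d} x_i(1−x_i)(∂f/∂x_i(x))² dx (upper bound UB2). -/

import Mathlib

open MeasureTheory Real
open intervalIntegral

noncomputable section

/-- The unit cube `[0,1]^d` in `ℝ^d`. -/
def unitCube (d : ℕ) : Set (Fin d → ℝ) := Set.Icc 0 1

/-- The partial derivative `∂f/∂x_i` at the point `x`. -/
def pderivI {d : ℕ} (f : (Fin d → ℝ) → ℝ) (i : Fin d) (x : Fin d → ℝ) : ℝ :=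
  deriv (fun t : ℝ => f (Function.update x i t)) (x i)

/-- `u_i(x) = f(x) - ∫₀¹ f(x₁,…,x_{i-1},t,x_{i+1},…,x_d) dt`, the sum of all ANOVA
terms of `f` depending on `x_i`. -/
def uComp {d : ℕ} (f : (Fin d → ℝ) → ℝ) (i : Fin d) (x : Fin d → ℝ) : ℝ :=
  f x - ∫ t in (0:ℝ)..1, f (Function.update x i t)

/-- The total variance `D = ∫ f² dx − (∫ f dx)²` over the unit cube. -/
def totVar {d : ℕ} (f : (Fin d → ℝ) → ℝ) : ℝ :=
  (∫ x in unitCube d, (f x) ^ 2) - (∫ x in unitCube d, f x) ^ 2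

/-- The total partial variance `D_i^tot = ∫ u_i² dx`. -/
def DTot {d : ℕ} (f : (Fin d → ℝ) → ℝ) (i : Fin d) : ℝ :=
  ∫ x in unitCube d, (uComp f i x) ^ 2

/-- The total Sobol' sensitivity index `S_i^tot = D_i^tot / D`. -/
def STot {d : ℕ} (f : (Fin d → ℝ) → ℝ) (i : Fin d) : ℝ :=
  DTot f i / totVar f

/-- The DGSM `ν_i = ∫ (∂f/∂x_i)² dx`. -/
def nuDGSM {d : ℕ} (f : (Fin d → ℝ) → ℝ) (i : Fin d) : ℝ :=
  ∫ x in unitCube d, (pderivI f i x) ^ 2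

/-- The DGSM `w_i^{(m)} = ∫ x_i^m (∂f/∂x_i) dx`. -/
def wDGSM {d : ℕ} (f : (Fin d → ℝ) → ℝ) (i : Fin d) (m : ℝ) : ℝ :=
  ∫ x in unitCube d, (x i) ^ m * pderivI f i x

/-- The DGSM `ς_i = (1/2) ∫ x_i (1 - x_i) (∂f/∂x_i)² dx`. -/
def sigmaDGSM {d : ℕ} (f : (Fin d → ℝ) → ℝ) (i : Fin d) : ℝ :=
  (1 / 2) * ∫ x in unitCube d, x i * (1 - x i) * (pderivI f i x) ^ 2

lemma primitive_hasDerivAt {h : ℝ → ℝ} (hh : Continuous h) (t : ℝ) :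
    HasDerivAt (fun u => ∫ r in (0:ℝ)..u, h r) (h t) t :=
  (intervalIntegral.integral_hasStrictDerivAt_right (hh.intervalIntegrable _ _)
    (hh.stronglyMeasurable.stronglyMeasurableAtFilter) hh.continuousAt).hasDerivAt

lemma cs_interval {h : ℝ → ℝ} (hh : Continuous h) {s t : ℝ} (hst : s ≤ t) :
    (∫ r in s..t, h r) ^ 2 ≤ (t - s) * ∫ r in s..t, (h r) ^ 2 := by
  rcases eq_or_lt_of_le hst with rfl | hlt
  · simp
  · have hd : 0 < t - s := sub_pos.2 hlt
    set I := ∫ r in s..t, h r with hI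
    have h0 : 0 ≤ ∫ r in s..t, ((t - s) * h r - I) ^ 2 :=
      intervalIntegral.integral_nonneg hst fun x _ => sq_nonneg _
    have hexp : ∫ r in s..t, ((t - s) * h r - I) ^ 2
        = (t - s) ^ 2 * (∫ r in s..t, (h r) ^ 2) - 2 * (t - s) * I * I + I ^ 2 * (t - s) := by
      have e1 : ∀ r, ((t - s) * h r - I) ^ 2
          = (t - s) ^ 2 * (h r) ^ 2 - (2 * (t - s) * I) * h r + I ^ 2 := fun r => by ring
      simp_rw [e1]
      rw [intervalIntegral.integral_add (((continuous_const.fun_mul (hh.fun_pow 2)).intervalIntegrable _ _).sub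
            ((continuous_const.fun_mul hh).intervalIntegrable _ _))
          (intervalIntegrable_const),
        intervalIntegral.integral_sub ((continuous_const.fun_mul (hh.fun_pow 2)).intervalIntegrable _ _)
          ((continuous_const.fun_mul hh).intervalIntegrable _ _),
        intervalIntegral.integral_const_mul, intervalIntegral.integral_const_mul,
        intervalIntegral.integral_const]
      ring_nf
      simp [smul_eq_mul]
      ring
    rw [hexp] at h0
    nlinarith [sq_nonneg I, sq_nonneg (t-s)]

lemma poincare1D {g : ℝ → ℝ} (hg : ContDiff ℝ 1 g) :
    ∫ t in (0:ℝ)..1, (g t - ∫ s in (0:ℝ)..1, g s) ^ 2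
      ≤ (1 / 2) * ∫ t in (0:ℝ)..1, t * (1 - t) * (deriv g t) ^ 2 := by
  have hgc : Continuous g := hg.continuous
  have hgd : Differentiable ℝ g := hg.differentiable one_ne_zero
  have hg' : Continuous (deriv g) := hg.continuous_deriv le_rfl
  have hg'2 : Continuous fun r => (deriv g r) ^ 2 := hg'.fun_pow 2
  set A := ∫ s in (0:ℝ)..1, g s with hA
  set B := ∫ s in (0:ℝ)..1, (g s) ^ 2 with hB
  set G := fun u : ℝ => ∫ r in (0:ℝ)..u, (deriv g r) ^ 2 with hGdef
  have hGd : ∀ t, HasDerivAt G ((deriv g t) ^ 2) t := primitive_hasDerivAt hg'2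
  have hGc : Continuous G := by
    rw [continuous_iff_continuousAt]; exact fun t => (hGd t).continuousAt
  set AG := ∫ s in (0:ℝ)..1, G s with hAG
  set C := ∫ s in (0:ℝ)..1, s * G s with hC
  -- pointwise Cauchy–Schwarz bound
  have key : ∀ s t : ℝ, (g t - g s) ^ 2 ≤ (t - s) * (G t - G s) := by
    have main : ∀ s t : ℝ, s ≤ t → (g t - g s) ^ 2 ≤ (t - s) * (G t - G s) := by
      intro s t h
      have hft : ∫ r in s..t, deriv g r = g t - g s :=
        intervalIntegral.integral_deriv_eq_sub (fun x _ => hgd x) (hg'.intervalIntegrable s t)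
      have hGsub : G t - G s = ∫ r in s..t, (deriv g r) ^ 2 :=
        intervalIntegral.integral_interval_sub_left (hg'2.intervalIntegrable _ _)
          (hg'2.intervalIntegrable _ _)
      calc (g t - g s) ^ 2 = (∫ r in s..t, deriv g r) ^ 2 := by rw [hft]
        _ ≤ (t - s) * ∫ r in s..t, (deriv g r) ^ 2 := cs_interval hg' h
        _ = (t - s) * (G t - G s) := by rw [hGsub]
    intro s t
    rcases le_total s t with h | h
    · exact main s t h
    · have e1 : (g t - g s) ^ 2 = (g s - g t) ^ 2 := by ring
      have e2 : (t - s) * (G t - G s) = (s - t) * (G s - G t) := by ring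
      rw [e1, e2]; exact main t s h
  -- inner integrals in closed form
  have inner1 : ∀ t : ℝ, ∫ s in (0:ℝ)..1, (g t - g s) ^ 2 = (g t) ^ 2 - 2 * A * g t + B := by
    intro t
    have e1 : ∀ s, (g t - g s) ^ 2 = ((g t) ^ 2 - (2 * g t) * g s) + (g s) ^ 2 := fun s => by ring
    simp_rw [e1]
    rw [intervalIntegral.integral_add (intervalIntegrable_const.sub
        ((continuous_const.fun_mul hgc).intervalIntegrable _ _)) ((hgc.fun_pow 2).intervalIntegrable _ _),
      intervalIntegral.integral_sub intervalIntegrable_const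
        ((continuous_const.fun_mul hgc).intervalIntegrable _ _),
      intervalIntegral.integral_const_mul, intervalIntegral.integral_const]
    simp [smul_eq_mul]; ring
  have inner2 : ∀ t : ℝ, ∫ s in (0:ℝ)..1, (t - s) * (G t - G s)
      = t * G t - t * AG - G t / 2 + C := by
    intro t
    have e1 : ∀ s : ℝ, (t - s) * (G t - G s) = ((t * G t - t * G s) - (G t) * s) + s * G s :=
      fun s => by ring
    simp_rw [e1]
    rw [intervalIntegral.integral_add
        ((intervalIntegrable_const.sub
          ((continuous_const.fun_mul hGc).intervalIntegrable _ _)).sub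
          ((continuous_const.fun_mul continuous_id').intervalIntegrable _ _))
        ((continuous_id'.fun_mul hGc).intervalIntegrable _ _),
      intervalIntegral.integral_sub (intervalIntegrable_const.sub
          ((continuous_const.fun_mul hGc).intervalIntegrable _ _))
        ((continuous_const.fun_mul continuous_id').intervalIntegrable _ _),
      intervalIntegral.integral_sub intervalIntegrable_const
        ((continuous_const.fun_mul hGc).intervalIntegrable _ _),
      intervalIntegral.integral_const_mul, intervalIntegral.integral_const_mul,
      intervalIntegral.integral_const, intervalIntegral.integral_const_mul, integral_id]
    rw [← hC, ← hAG]
    simp [smul_eq_mul]; ring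
  -- the middle monotone step
  have mid : ∫ t in (0:ℝ)..1, ((g t) ^ 2 - 2 * A * g t + B)
      ≤ ∫ t in (0:ℝ)..1, (t * G t - t * AG - G t / 2 + C) := by
    have h1c : Continuous fun t => (g t) ^ 2 - 2 * A * g t + B :=
      ((hgc.fun_pow 2).fun_sub (continuous_const.fun_mul hgc)).fun_add continuous_const
    have h2c : Continuous fun t : ℝ => t * G t - t * AG - G t / 2 + C :=
      (((continuous_id'.fun_mul hGc).fun_sub (continuous_id'.fun_mul continuous_const)).fun_sub
        (hGc.div_const 2)).fun_add continuous_const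
    refine intervalIntegral.integral_mono_on zero_le_one (h1c.intervalIntegrable _ _)
      (h2c.intervalIntegrable _ _) (fun t _ => ?_)
    rw [← inner1 t, ← inner2 t]
    exact intervalIntegral.integral_mono_on zero_le_one
      (((continuous_const.fun_sub hgc).fun_pow 2).intervalIntegrable _ _)
      (((continuous_const.fun_sub continuous_id').fun_mul (continuous_const.fun_sub hGc)).intervalIntegrable _ _)
      (fun s _ => key s t)
  -- closed forms of outer integrals
  have lhs_eq : ∫ t in (0:ℝ)..1, (g t - A) ^ 2 = B - A ^ 2 := by
    have e : ∀ t, (g t - A) ^ 2 = ((g t) ^ 2 - (2 * A) * g t) + A ^ 2 := fun t => by ring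
    simp_rw [e]
    rw [intervalIntegral.integral_add (((hgc.fun_pow 2).fun_sub (continuous_const.fun_mul hgc)).intervalIntegrable _ _)
        intervalIntegrable_const,
      intervalIntegral.integral_sub ((hgc.fun_pow 2).intervalIntegrable _ _)
        ((continuous_const.fun_mul hgc).intervalIntegrable _ _),
      intervalIntegral.integral_const_mul, intervalIntegral.integral_const]
    simp [smul_eq_mul]; ring
  have m1 : ∫ t in (0:ℝ)..1, ((g t) ^ 2 - 2 * A * g t + B) = B - 2 * A * A + B := by
    rw [intervalIntegral.integral_add (((hgc.fun_pow 2).fun_sub (continuous_const.fun_mul hgc)).intervalIntegrable _ _)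
        intervalIntegrable_const,
      intervalIntegral.integral_sub ((hgc.fun_pow 2).intervalIntegrable _ _)
        ((continuous_const.fun_mul hgc).intervalIntegrable _ _),
      intervalIntegral.integral_const_mul, intervalIntegral.integral_const]
    simp [smul_eq_mul]
    rw [← hB, ← hA]
  have m2 : ∫ t in (0:ℝ)..1, (t * G t - t * AG - G t / 2 + C) = 2 * C - AG := by
    have e : ∀ t : ℝ, t * G t - t * AG - G t / 2 + C
        = ((t * G t - AG * t) - (1/2) * G t) + C := fun t => by ring
    simp_rw [e]
    rw [intervalIntegral.integral_add
        ((((continuous_id'.fun_mul hGc).fun_sub (continuous_const.fun_mul continuous_id')).fun_sub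
          (continuous_const.fun_mul hGc)).intervalIntegrable _ _)
        intervalIntegrable_const,
      intervalIntegral.integral_sub
        (((continuous_id'.fun_mul hGc).fun_sub (continuous_const.fun_mul continuous_id')).intervalIntegrable _ _)
        ((continuous_const.fun_mul hGc).intervalIntegrable _ _),
      intervalIntegral.integral_sub ((continuous_id'.fun_mul hGc).intervalIntegrable _ _)
        ((continuous_const.fun_mul continuous_id').intervalIntegrable _ _),
      intervalIntegral.integral_const_mul, intervalIntegral.integral_const_mul,
      intervalIntegral.integral_const, integral_id]
    rw [← hC, ← hAG]
    simp [smul_eq_mul]; ring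
  -- integration by parts
  have ibp0 : ∫ s in (0:ℝ)..1, (s ^ 2 - s) * (deriv g s) ^ 2
      = (1 ^ 2 - 1) * G 1 - (0 ^ 2 - 0) * G 0 - ∫ s in (0:ℝ)..1, (2 * s - 1) * G s := by
    refine intervalIntegral.integral_mul_deriv_eq_deriv_mul (fun x _ => ?_) (fun x _ => hGd x)
      ((by fun_prop : Continuous fun x : ℝ => 2 * x - 1).intervalIntegrable _ _)
      (hg'2.intervalIntegrable _ _)
    have h := (hasDerivAt_pow 2 x).fun_sub (hasDerivAt_id x)
    norm_num at h
    exact h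
  have ibp : ∫ s in (0:ℝ)..1, (2 * s - 1) * G s
      = ∫ s in (0:ℝ)..1, (s - s ^ 2) * (deriv g s) ^ 2 := by
    have e : ∀ s : ℝ, (s - s ^ 2) * (deriv g s) ^ 2 = -((s ^ 2 - s) * (deriv g s) ^ 2) :=
      fun s => by ring
    simp_rw [e]
    rw [intervalIntegral.integral_neg, ibp0]
    ring
  have expand23 : ∫ s in (0:ℝ)..1, (2 * s - 1) * G s = 2 * C - AG := by
    have e : ∀ s : ℝ, (2 * s - 1) * G s = 2 * (s * G s) - G s := fun s => by ring
    simp_rw [e]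
    rw [intervalIntegral.integral_sub ((continuous_const.fun_mul (continuous_id'.fun_mul hGc)).intervalIntegrable _ _)
        (hGc.intervalIntegrable _ _), intervalIntegral.integral_const_mul]
  have rhs_eq : ∫ t in (0:ℝ)..1, t * (1 - t) * (deriv g t) ^ 2
      = ∫ t in (0:ℝ)..1, (t - t ^ 2) * (deriv g t) ^ 2 := by
    have e : ∀ t : ℝ, t * (1 - t) * (deriv g t) ^ 2 = (t - t ^ 2) * (deriv g t) ^ 2 :=
      fun t => by ring
    simp_rw [e]
  rw [lhs_eq, rhs_eq, ← ibp, expand23]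
  rw [m1, m2] at mid
  linarith

variable {d : ℕ}

instance uniqueEqSub (i : Fin d) : Unique {j : Fin d // j = i} :=
  ⟨⟨⟨i, rfl⟩⟩, fun a => Subtype.ext a.2⟩

/-- Combine the `i`-th coordinate `t` with the remaining coordinates `y`. -/
def phiMap (i : Fin d) (t : ℝ) (y : {j : Fin d // ¬ j = i} → ℝ) : Fin d → ℝ :=
  fun j => if h : j = i then t else y ⟨j, h⟩

lemma phiMap_eq (i : Fin d) (t : ℝ) (y : {j : Fin d // ¬ j = i} → ℝ) :
    phiMap i t y = (MeasurableEquiv.piEquivPiSubtypeProd (fun _ : Fin d => ℝ) (· = i)).symm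
      ((MeasurableEquiv.funUnique {j : Fin d // j = i} ℝ).symm t, y) := by
  funext j
  by_cases h : j = i <;>
    simp [phiMap, h, MeasurableEquiv.piEquivPiSubtypeProd, Equiv.piEquivPiSubtypeProd,
      MeasurableEquiv.funUnique, Equiv.funUnique]

lemma phiMap_apply_i (i : Fin d) (t : ℝ) (y : {j : Fin d // ¬ j = i} → ℝ) :
    phiMap i t y i = t := by simp [phiMap]

lemma update_phiMap (i : Fin d) (t s : ℝ) (y : {j : Fin d // ¬ j = i} → ℝ) :
    Function.update (phiMap i t y) i s = phiMap i s y := by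
  funext j
  rcases eq_or_ne j i with rfl | h
  · simp [phiMap]
  · simp [Function.update_of_ne h, phiMap, h]

lemma phiMap_contDiff (i : Fin d) (y : {j : Fin d // ¬ j = i} → ℝ) :
    ContDiff ℝ 1 fun t => phiMap i t y := by
  have e : (fun t => phiMap i t y) = fun t => Function.update (phiMap i 0 y) i t := by
    funext t; rw [update_phiMap]
  rw [e]
  exact contDiff_update (𝕜 := ℝ) 1 (phiMap i 0 y) i

lemma phiMap_continuous (i : Fin d) :
    Continuous fun p : ℝ × ({j : Fin d // ¬ j = i} → ℝ) => phiMap i p.1 p.2 := by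
  apply continuous_pi
  intro j
  by_cases h : j = i
  · simpa [phiMap, h] using continuous_fst
  · simpa [phiMap, h] using (continuous_apply (⟨j, h⟩ : {j : Fin d // ¬ j = i})).comp' continuous_snd

lemma cube_split (i : Fin d) (h : (Fin d → ℝ) → ℝ) (hh : Continuous h) :
    (∫ x in unitCube d, h x)
      = (∫ y in Set.Icc (0 : {j : Fin d // ¬ j = i} → ℝ) 1,
          ∫ t in Set.Icc (0:ℝ) 1, h (phiMap i t y)) ∧
    IntegrableOn (fun y => ∫ t in Set.Icc (0:ℝ) 1, h (phiMap i t y))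
      (Set.Icc (0 : {j : Fin d // ¬ j = i} → ℝ) 1) := by
  classical
  letI : Fintype {j : Fin d // j = i} := Subtype.fintype _
  set e := MeasurableEquiv.piEquivPiSubtypeProd (fun _ : Fin d => ℝ) (fun j => j = i) with he
  have hpe : MeasurePreserving (⇑e) := volume_preserving_piEquivPiSubtypeProd _ _
  set ψ := MeasurableEquiv.funUnique {j : Fin d // j = i} ℝ with hψ
  have hpψ : MeasurePreserving (⇑ψ) := by
    have h0 := volume_preserving_funUnique {j : Fin d // j = i} ℝ
    convert h0 using 2
    · rfl
    · rfl
    · congr 1; exact Subsingleton.elim _ _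
  set A : Set ({j : Fin d // j = i} → ℝ) := Set.pi Set.univ fun _ => Set.Icc (0:ℝ) 1 with hA
  set B : Set ({j : Fin d // ¬ j = i} → ℝ) := Set.pi Set.univ fun _ => Set.Icc (0:ℝ) 1 with hB
  have hAIcc : A = Set.Icc 0 1 := by rw [hA, Set.pi_univ_Icc]; rfl
  have hBIcc : B = Set.Icc 0 1 := by rw [hB, Set.pi_univ_Icc]; rfl
  have hcube : unitCube d = Set.pi Set.univ (fun _ : Fin d => Set.Icc (0:ℝ) 1) := by
    rw [unitCube, Set.pi_univ_Icc]; rfl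
  -- continuity of the equivalences
  have hcsymm : Continuous (⇑e.symm) :=
    (Homeomorph.piEquivPiSubtypeProd (fun j : Fin d => j = i) (fun _ => ℝ)).symm.continuous
  have hψsymm : Continuous (⇑ψ.symm) := by
    have e1 : (⇑ψ.symm) = fun t : ℝ => fun _ : {j : Fin d // j = i} => t := by
      funext t j
      simp [hψ, MeasurableEquiv.funUnique, Equiv.funUnique]
    rw [e1]; exact continuous_pi fun _ => continuous_id
  -- step 1: transfer to the product space
  have hpreim : ⇑e.symm ⁻¹' (Set.pi Set.univ (fun _ : Fin d => Set.Icc (0:ℝ) 1)) = A ×ˢ B :=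
    Equiv.preimage_piEquivPiSubtypeProd_symm_pi (fun j => j = i) fun _ => Set.Icc (0:ℝ) 1
  have h1 : ∫ x in unitCube d, h x = ∫ p in A ×ˢ B, h (e.symm p) := by
    rw [← (hpe.symm e).setIntegral_preimage_emb e.symm.measurableEmbedding, hcube, hpreim]
  -- integrability on the product
  have hK : IsCompact (A ×ˢ B) := by
    rw [hAIcc, hBIcc]; exact isCompact_Icc.prod isCompact_Icc
  have hint : IntegrableOn (fun p => h (e.symm p)) (A ×ˢ B) :=
    (hh.comp hcsymm).continuousOn.integrableOn_compact hK
  -- step 2: iterated integral, inner over the i-th coordinate block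
  have h2 : ∫ p in A ×ˢ B, h (e.symm p) = ∫ a in A, ∫ y in B, h (e.symm (a, y)) := by
    rw [Measure.volume_eq_prod] at hint ⊢
    exact setIntegral_prod _ hint
  -- step 3: swap the two integrals
  have hintR : Integrable (Function.uncurry fun a y => h (e.symm (a, y)))
      ((volume.restrict A).prod (volume.restrict B)) := by
    rw [Measure.prod_restrict]
    have e2 : (Function.uncurry fun a y => h (e.symm (a, y))) = fun p => h (e.symm p) := by
      funext p; cases p; rfl
    rw [e2]
    rw [Measure.volume_eq_prod] at hint
    exact hint
  have h3 : ∫ a in A, ∫ y in B, h (e.symm (a, y)) = ∫ y in B, ∫ a in A, h (e.symm (a, y)) :=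
    integral_integral_swap hintR
  -- step 4: inner integral via funUnique
  have h4 : ∀ y, ∫ a in A, h (e.symm (a, y)) = ∫ t in Set.Icc (0:ℝ) 1, h (phiMap i t y) := by
    intro y
    have h5 := (hpψ.symm ψ).setIntegral_preimage_emb ψ.symm.measurableEmbedding
      (fun a => h (e.symm (a, y))) A
    rw [← h5]
    have hpre : ⇑ψ.symm ⁻¹' A = Set.Icc (0:ℝ) 1 := by
      ext t
      simp only [hA, Set.mem_preimage, Set.mem_pi, Set.mem_univ, forall_true_left,
        Set.mem_Icc, hψ, MeasurableEquiv.funUnique, Equiv.funUnique, MeasurableEquiv.coe_mk,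
        Equiv.coe_fn_symm_mk]
      constructor
      · intro hj
        exact hj ⟨i, rfl⟩
      · intro ht j
        exact ht
    rw [hpre]
    congr 1
  -- integrability of the iterated function
  have hint2 : IntegrableOn (fun y => ∫ t in Set.Icc (0:ℝ) 1, h (phiMap i t y))
      (Set.Icc (0 : {j : Fin d // ¬ j = i} → ℝ) 1) := by
    have h6 := hintR.swap.integral_prod_left
    rw [← hBIcc]
    refine h6.congr (Filter.EventuallyEq.of_eq ?_)
    funext y
    exact h4 y
  refine ⟨?_, hint2⟩
  rw [h1, h2, h3, ← hBIcc]
  congr 1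
  funext y
  exact h4 y

variable {f : (Fin d → ℝ) → ℝ} {i : Fin d}

lemma continuous_update2 (i : Fin d) :
    Continuous fun p : (Fin d → ℝ) × ℝ => Function.update p.1 i p.2 := by
  apply continuous_pi
  intro j
  rcases eq_or_ne j i with rfl | h
  · simpa [Function.update_self] using continuous_snd
  · simp only [Function.update_of_ne h]
    exact (continuous_apply j).comp continuous_fst

lemma pderivI_eq_fderiv (hf : ContDiff ℝ 1 f) (x : Fin d → ℝ) :
    pderivI f i x = fderiv ℝ f x (Pi.single i 1) := by
  have h2 := hasDerivAt_update x i (x i)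
  have h3 := ((hf.differentiable one_ne_zero) (Function.update x i (x i))).hasFDerivAt.comp_hasDerivAt
    (x i) h2
  rw [Function.update_eq_self] at h3
  exact h3.deriv

lemma continuous_pderivI (hf : ContDiff ℝ 1 f) : Continuous (pderivI f i) := by
  have e : pderivI f i = fun x => fderiv ℝ f x (Pi.single i 1) := by
    funext x; exact pderivI_eq_fderiv hf x
  rw [e]
  exact (ContinuousLinearMap.apply ℝ ℝ ((Pi.single i 1 : Fin d → ℝ))).continuous.comp
    (hf.continuous_fderiv one_ne_zero)

lemma continuous_uComp (hf : ContDiff ℝ 1 f) : Continuous (uComp f i) := by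
  have h1 : Continuous fun x : Fin d → ℝ => ∫ t in (0:ℝ)..1, f (Function.update x i t) := by
    apply intervalIntegral.continuous_parametric_intervalIntegral_of_continuous'
    exact hf.continuous.comp (continuous_update2 i)
  exact hf.continuous.sub h1

/-- **Theorem 5 (upper bound UB2).** For `f` continuously differentiable on the unit cube
with `D > 0`, the total Sobol' index satisfies `S_i^tot ≤ ς_i / D`, where
`ς_i = (1/2) ∫ x_i (1 − x_i) (∂f/∂x_i)² dx`. -/
theorem dgsm_upper_bound_UB2 (d : ℕ) (f : (Fin d → ℝ) → ℝ) (hf : ContDiff ℝ 1 f)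
    (i : Fin d) (hD : 0 < totVar f) :
    STot f i ≤ sigmaDGSM f i / totVar f := by
  have key : DTot f i ≤ sigmaDGSM f i := by
    have hu2 : Continuous fun x => (uComp f i x) ^ 2 := (continuous_uComp hf).pow 2
    have hs : Continuous fun x : Fin d → ℝ => x i * (1 - x i) * (pderivI f i x) ^ 2 :=
      ((continuous_apply i).mul (continuous_const.sub (continuous_apply i))).mul
        ((continuous_pderivI hf).pow 2)
    obtain ⟨e1, int1⟩ := cube_split i _ hu2
    obtain ⟨e2, int2⟩ := cube_split i _ hs
    rw [DTot, e1, sigmaDGSM, e2, ← MeasureTheory.integral_const_mul]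
    refine integral_mono int1 (int2.const_mul _) fun y => ?_
    -- the 1-dimensional slice
    set g : ℝ → ℝ := fun t => f (phiMap i t y) with hg
    have hgC : ContDiff ℝ 1 g := hf.comp (phiMap_contDiff i y)
    have hIcc1 : ∫ t in Set.Icc (0:ℝ) 1, (uComp f i (phiMap i t y)) ^ 2
        = ∫ t in (0:ℝ)..1, (g t - ∫ s in (0:ℝ)..1, g s) ^ 2 := by
      rw [intervalIntegral.integral_of_le zero_le_one, ← integral_Icc_eq_integral_Ioc]
      congr 1
      funext t
      simp only [uComp, update_phiMap, hg]
    have hIcc2 : ∫ t in Set.Icc (0:ℝ) 1,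
        (phiMap i t y) i * (1 - (phiMap i t y) i) * (pderivI f i (phiMap i t y)) ^ 2
        = ∫ t in (0:ℝ)..1, t * (1 - t) * (deriv g t) ^ 2 := by
      rw [intervalIntegral.integral_of_le zero_le_one, ← integral_Icc_eq_integral_Ioc]
      congr 1
      funext t
      simp only [pderivI, update_phiMap, phiMap_apply_i, hg]
    calc (fun y => ∫ t in Set.Icc (0:ℝ) 1, (uComp f i (phiMap i t y)) ^ 2) y
        = ∫ t in (0:ℝ)..1, (g t - ∫ s in (0:ℝ)..1, g s) ^ 2 := hIcc1
      _ ≤ (1/2) * ∫ t in (0:ℝ)..1, t * (1 - t) * (deriv g t) ^ 2 := poincare1D hgC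
      _ = (1/2) * ∫ t in Set.Icc (0:ℝ) 1,
            (phiMap i t y) i * (1 - (phiMap i t y) i) * (pderivI f i (phiMap i t y)) ^ 2 := by
          rw [hIcc2]
  show DTot f i / totVar f ≤ sigmaDGSM f i / totVar f
  exact (div_le_div_iff_of_pos_right hD).mpr key
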